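/- Let $\mathcal Z$ be an a.s.-positive finite random variable, $\alpha>0$, $b\ge2$ with $\alpha=\sqrt{2\log b}$, and suppose the law of the maximum $M_n$ of a branching random walk with $b$ branches and i.i.d. $\mathcal N(0,1)$ increments satisfies $P(M_n\le m_n+u)\to E(e^{-\alpha^{-1}e^{-\alpha u}\mathcal Z})$ for all $u\in\mathbb R$, where $m_n-m_{n-1}\to\alpha$. Then $\mathcal Z$ satisfies the cascade relation $\mathcal Z\overset{\mathrm{law}}=\sum_{i=1}^b e^{\alpha\zeta_i-\alpha^2}\mathcal Z_i$, where $\zeta_1,\dots,\zeta_b$ are i.i.d. $\mathcal N(0,1)$ and $\mathcal Z_1,\dots,\mathcal Z_b$ are i.i.d. copies of $\mathcal Z$ independent of the $\zeta_i$'s. -/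

import Mathlib

open MeasureTheory ProbabilityTheory Filter
open scoped ENNReal NNReal

lemma aux_integral_pi_prod {E : Type*} [MeasurableSpace E] (μ : Measure E) [SigmaFinite μ]
    {n : ℕ} (f : Fin n → E → ℝ) :
    ∫ x : Fin n → E, ∏ i, f i (x i) ∂(Measure.pi fun _ => μ) = ∏ i, ∫ x, f i x ∂μ := by
  letI : MeasureSpace E := ⟨μ⟩
  haveI : SigmaFinite (volume : Measure E) := ‹SigmaFinite μ›
  exact MeasureTheory.integral_fintype_prod_eq_prod (f := f) (μ := fun _ => μ)

lemma aux_cdf_measurable (μ : Measure ℝ) : Measurable fun x => μ (Set.Iic x) := by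
  have : Monotone fun x => μ (Set.Iic x) := fun a c h => measure_mono (Set.Iic_subset_Iic.2 h)
  exact this.measurable

lemma aux_rec {b : ℕ} (hb : 2 ≤ b) (ν μ' : Measure ℝ) [IsProbabilityMeasure ν]
    [IsProbabilityMeasure μ'] (x : ℝ) :
    (Measure.map (fun q : (Fin b → ℝ) × (Fin b → ℝ) => ⨆ i, (q.1 i + q.2 i))
        ((Measure.pi fun _ : Fin b => ν).prod (Measure.pi fun _ : Fin b => μ'))) (Set.Iic x)
      = ∫⁻ ζ, ∏ i, μ' (Set.Iic (x - ζ i)) ∂(Measure.pi fun _ : Fin b => ν) := by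
  haveI : NeZero b := ⟨by omega⟩
  have hg : Measurable (fun q : (Fin b → ℝ) × (Fin b → ℝ) => ⨆ i, (q.1 i + q.2 i)) := by
    apply Measurable.iSup
    intro i
    exact ((measurable_pi_apply i).comp measurable_fst).add
      ((measurable_pi_apply i).comp measurable_snd)
  rw [Measure.map_apply hg measurableSet_Iic]
  have hset : (fun q : (Fin b → ℝ) × (Fin b → ℝ) => ⨆ i, (q.1 i + q.2 i)) ⁻¹' (Set.Iic x)
      = {q : (Fin b → ℝ) × (Fin b → ℝ) | ∀ i, q.1 i + q.2 i ≤ x} := by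
    ext q
    simp only [Set.mem_preimage, Set.mem_Iic, Set.mem_setOf_eq]
    exact ciSup_le_iff (Set.Finite.bddAbove (Set.finite_range _))
  rw [hset, Measure.prod_apply]
  · congr 1
    ext ζ
    have : (Prod.mk ζ ⁻¹' {q : (Fin b → ℝ) × (Fin b → ℝ) | ∀ i, q.1 i + q.2 i ≤ x})
        = Set.pi Set.univ (fun i => Set.Iic (x - ζ i)) := by
      ext w
      simp only [Set.mem_preimage, Set.mem_setOf_eq, Set.mem_pi, Set.mem_univ, Set.mem_Iic,
        forall_true_left]
      constructor <;> · intro h i; linarith [h i]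
    rw [this, Measure.pi_pi]
  · have : MeasurableSet {q : (Fin b → ℝ) × (Fin b → ℝ) | ∀ i, q.1 i + q.2 i ≤ x} := by
      rw [Set.setOf_forall]
      exact MeasurableSet.iInter fun i =>
        measurableSet_le ((measurable_fst.eval.add measurable_snd.eval)) measurable_const
    exact this

lemma aux_phi_cont {α : ℝ} (hα : 0 < α) (ρ : Measure ℝ) [IsProbabilityMeasure ρ]
    (hpos : ρ (Set.Iic 0) = 0) :
    Continuous fun u : ℝ => ∫ z, Real.exp (-(α⁻¹ * Real.exp (-α * u) * z)) ∂ρ := by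
  have hae : ∀ᵐ z ∂ρ, 0 < z := by
    rw [ae_iff]
    convert hpos using 2
    ext z; simp [not_lt]
  apply continuous_of_dominated (bound := fun _ => (1 : ℝ))
  · intro u
    exact (Continuous.aestronglyMeasurable (by fun_prop))
  · intro u
    filter_upwards [hae] with z hz
    rw [Real.norm_eq_abs, abs_of_pos (Real.exp_pos _), Real.exp_le_one_iff]
    have : 0 ≤ α⁻¹ * Real.exp (-α * u) * z := by positivity
    linarith
  · exact integrable_const 1
  · exact Eventually.of_forall fun z => by fun_prop

lemma aux_squeeze {F : ℕ → ℝ → ℝ} {m : ℕ → ℝ} {φ : ℝ → ℝ}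
    (hFmono : ∀ n, Monotone (F n)) (hF0 : ∀ n x, 0 ≤ F n x) (hF1 : ∀ n x, F n x ≤ 1)
    (hφ : Continuous φ)
    (hconv : ∀ u : ℝ, Tendsto (fun n => F n (m n + u)) atTop (nhds (φ u)))
    {u : ℕ → ℝ} {c : ℝ} (hu : Tendsto u atTop (nhds c)) :
    Tendsto (fun n => F n (m n + u n)) atTop (nhds (φ c)) := by
  have hba : IsBoundedUnder (· ≤ ·) atTop (fun n => F n (m n + u n)) :=
    isBoundedUnder_of ⟨1, fun n => hF1 _ _⟩
  have hbb : IsBoundedUnder (· ≥ ·) atTop (fun n => F n (m n + u n)) :=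
    isBoundedUnder_of ⟨0, fun n => hF0 _ _⟩
  have htε : Tendsto (fun ε : ℝ => c - ε) (nhdsWithin 0 (Set.Ioi 0)) (nhds c) := by
    have : Tendsto (fun ε : ℝ => c - ε) (nhds 0) (nhds (c - 0)) :=
      tendsto_const_nhds.sub tendsto_id
    rw [sub_zero] at this
    exact this.mono_left nhdsWithin_le_nhds
  have htε' : Tendsto (fun ε : ℝ => c + ε) (nhdsWithin 0 (Set.Ioi 0)) (nhds c) := by
    have : Tendsto (fun ε : ℝ => c + ε) (nhds 0) (nhds (c + 0)) :=
      tendsto_const_nhds.add tendsto_id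
    rw [add_zero] at this
    exact this.mono_left nhdsWithin_le_nhds
  apply tendsto_of_le_liminf_of_limsup_le _ _ hba hbb
  · -- φ c ≤ liminf
    have key : ∀ ε ∈ Set.Ioi (0:ℝ), φ (c - ε) ≤ liminf (fun n => F n (m n + u n)) atTop := by
      intro ε hε
      have h1 : ∀ᶠ n in atTop, F n (m n + (c - ε)) ≤ F n (m n + u n) := by
        filter_upwards [hu.eventually (eventually_ge_nhds (show c - ε < c by
          simp only [Set.mem_Ioi] at hε; linarith))] with n hn
        exact hFmono n (by linarith)
      calc φ (c - ε) = liminf (fun n => F n (m n + (c - ε))) atTop :=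
            ((hconv (c - ε)).liminf_eq).symm
        _ ≤ _ := liminf_le_liminf h1
            (isBoundedUnder_of ⟨0, fun n => hF0 _ _⟩) hba.isCoboundedUnder_ge
    exact le_of_tendsto ((hφ.tendsto c).comp htε) (eventually_nhdsWithin_of_forall key)
  · have key : ∀ ε ∈ Set.Ioi (0:ℝ), limsup (fun n => F n (m n + u n)) atTop ≤ φ (c + ε) := by
      intro ε hε
      have h1 : ∀ᶠ n in atTop, F n (m n + u n) ≤ F n (m n + (c + ε)) := by
        filter_upwards [hu.eventually (eventually_le_nhds (show c < c + ε by
          simp only [Set.mem_Ioi] at hε; linarith))] with n hn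
        exact hFmono n (by linarith)
      calc limsup (fun n => F n (m n + u n)) atTop
          ≤ limsup (fun n => F n (m n + (c + ε))) atTop := limsup_le_limsup h1
            hbb.isCoboundedUnder_le (isBoundedUnder_of ⟨1, fun n => hF1 _ _⟩)
        _ = φ (c + ε) := (hconv (c + ε)).limsup_eq
    exact ge_of_tendsto ((hφ.tendsto c).comp htε') (eventually_nhdsWithin_of_forall key)

lemma aux_ext {μ ν : Measure ℝ} [IsProbabilityMeasure μ] [IsProbabilityMeasure ν]
    (hμ : μ (Set.Iic 0) = 0) (hν : ν (Set.Iic 0) = 0)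
    (h : ∀ t : ℝ, 0 < t → ∫ z, Real.exp (-(t * z)) ∂μ = ∫ z, Real.exp (-(t * z)) ∂ν) :
    μ = ν := by
  set T : ℝ → ℝ := fun x => Real.exp (-x) with hT_def
  have hTc : Continuous T := by fun_prop
  have hTinj : Function.Injective T := fun a c hac => by
    simpa using Real.exp_injective hac
  have hTm : Measurable T := hTc.measurable
  set μ' : Measure ℝ := μ.map T with hμ'_def
  set ν' : Measure ℝ := ν.map T with hν'_def
  haveI : IsProbabilityMeasure μ' := Measure.isProbabilityMeasure_map hTm.aemeasurable
  haveI : IsProbabilityMeasure ν' := Measure.isProbabilityMeasure_map hTm.aemeasurable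
  have haeIcc : ∀ (κ : Measure ℝ), IsProbabilityMeasure κ → κ (Set.Iic 0) = 0 →
      ∀ᵐ y ∂(κ.map T), y ∈ Set.Icc (0:ℝ) 1 := by
    intro κ hκ hκ0
    refine (MeasureTheory.ae_map_iff hTm.aemeasurable measurableSet_Icc).mpr ?_
    have haepos : ∀ᵐ x ∂κ, 0 < x := by
      rw [ae_iff]
      convert hκ0 using 2
      ext z; simp [not_lt]
    filter_upwards [haepos] with x hx
    constructor
    · exact (Real.exp_pos _).le
    · rw [Real.exp_le_one_iff]; linarith
  have hμIcc := haeIcc μ ‹_› hμ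
  have hνIcc := haeIcc ν ‹_› hν
  -- integrability of powers
  have hIntPow : ∀ (κ : Measure ℝ), IsProbabilityMeasure κ → (∀ᵐ y ∂κ, y ∈ Set.Icc (0:ℝ) 1) →
      ∀ k : ℕ, Integrable (fun y : ℝ => y ^ k) κ := by
    intro κ hκ hIcc k
    apply Integrable.mono' (integrable_const (1:ℝ)) (by fun_prop)
    filter_upwards [hIcc] with y hy
    rw [Real.norm_eq_abs, abs_pow]
    exact pow_le_one₀ (abs_nonneg y) (abs_le.2 ⟨by linarith [hy.1], hy.2⟩)
  -- moments agree
  have hmom : ∀ k : ℕ, ∫ y, y ^ k ∂μ' = ∫ y, y ^ k ∂ν' := by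
    intro k
    rcases Nat.eq_zero_or_pos k with rfl | hk
    · simp
    · have key := h k (by exact_mod_cast hk)
      rw [hμ'_def, hν'_def, integral_map hTm.aemeasurable (by fun_prop),
        integral_map hTm.aemeasurable (by fun_prop)]
      simp only [hT_def]
      convert key using 3 with x
      · rw [← Real.exp_nat_mul]; ring_nf
      · rw [← Real.exp_nat_mul]; ring_nf
  -- polynomials agree
  have hpoly : ∀ p : Polynomial ℝ, ∫ y, p.eval y ∂μ' = ∫ y, p.eval y ∂ν' := by
    intro p
    have expand : ∀ (κ : Measure ℝ), IsProbabilityMeasure κ → (∀ᵐ y ∂κ, y ∈ Set.Icc (0:ℝ) 1) →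
        ∫ y, p.eval y ∂κ = ∑ k ∈ Finset.range (p.natDegree + 1), p.coeff k * ∫ y, y ^ k ∂κ := by
      intro κ hκ hIcc
      have : ∀ y : ℝ, p.eval y = ∑ k ∈ Finset.range (p.natDegree + 1), p.coeff k * y ^ k :=
        fun y => Polynomial.eval_eq_sum_range y
      simp_rw [this]
      rw [integral_finset_sum]
      · exact Finset.sum_congr rfl fun k _ => integral_const_mul _ _
      · exact fun k _ => (hIntPow κ hκ hIcc k).const_mul _
    rw [expand μ' ‹_› hμIcc, expand ν' ‹_› hνIcc]
    exact Finset.sum_congr rfl fun k _ => by rw [hmom k]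
  -- bounded continuous agree
  have hbc : ∀ g : ℝ → ℝ, Continuous g → ∫ y, g y ∂μ' = ∫ y, g y ∂ν' := by
    intro g hg
    obtain ⟨C, hC⟩ := (isCompact_Icc (a := (0:ℝ)) (b := 1)).exists_bound_of_continuousOn
      hg.continuousOn
    have hIntg : ∀ (κ : Measure ℝ), IsProbabilityMeasure κ → (∀ᵐ y ∂κ, y ∈ Set.Icc (0:ℝ) 1) →
        Integrable g κ := by
      intro κ hκ hIcc
      apply Integrable.mono' (integrable_const C) hg.aestronglyMeasurable
      filter_upwards [hIcc] with y hy
      exact hC y hy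
    have hIntp : ∀ (κ : Measure ℝ), IsProbabilityMeasure κ → (∀ᵐ y ∂κ, y ∈ Set.Icc (0:ℝ) 1) →
        ∀ p : Polynomial ℝ, Integrable (fun y => p.eval y) κ := by
      intro κ hκ hIcc p
      obtain ⟨D, hD⟩ := (isCompact_Icc (a := (0:ℝ)) (b := 1)).exists_bound_of_continuousOn
        (p.continuous_aeval).continuousOn
      apply Integrable.mono' (integrable_const D) (Polynomial.continuous p).aestronglyMeasurable
      filter_upwards [hIcc] with y hy
      simpa using hD y hy
    by_contra hne
    set δ := |∫ y, g y ∂μ' - ∫ y, g y ∂ν'| with hδ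
    have hδpos : 0 < δ := abs_pos.2 (sub_ne_zero.2 hne)
    obtain ⟨p, hp⟩ := exists_polynomial_near_of_continuousOn 0 1 g hg.continuousOn (δ/4)
      (by linarith)
    have bound : ∀ (κ : Measure ℝ), IsProbabilityMeasure κ → (∀ᵐ y ∂κ, y ∈ Set.Icc (0:ℝ) 1) →
        |∫ y, g y ∂κ - ∫ y, p.eval y ∂κ| ≤ δ/4 := by
      intro κ hκ hIcc
      rw [← integral_sub (hIntg κ hκ hIcc) (hIntp κ hκ hIcc p)]
      rw [← Real.norm_eq_abs]
      calc ‖∫ y, (g y - p.eval y) ∂κ‖ ≤ (δ/4) * (κ Set.univ).toReal := by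
            apply norm_integral_le_of_norm_le_const
            filter_upwards [hIcc] with y hy
            rw [Real.norm_eq_abs, abs_sub_comm]
            exact (hp y hy).le
        _ = δ/4 := by simp
    have b1 := bound μ' ‹_› hμIcc
    have b2 := bound ν' ‹_› hνIcc
    have b3 := hpoly p
    rw [hδ] at hδpos
    have : |∫ y, g y ∂μ' - ∫ y, g y ∂ν'| ≤ δ/2 := by
      have := abs_sub_abs_le_abs_sub (∫ y, g y ∂μ' - ∫ y, p.eval y ∂μ')
        (∫ y, g y ∂ν' - ∫ y, p.eval y ∂ν')
      calc |∫ y, g y ∂μ' - ∫ y, g y ∂ν'|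
          = |(∫ y, g y ∂μ' - ∫ y, p.eval y ∂μ') - (∫ y, g y ∂ν' - ∫ y, p.eval y ∂ν')| := by
            rw [b3]; ring_nf
        _ ≤ |∫ y, g y ∂μ' - ∫ y, p.eval y ∂μ'| + |∫ y, g y ∂ν' - ∫ y, p.eval y ∂ν'| :=
            abs_sub _ _
        _ ≤ δ/4 + δ/4 := add_le_add b1 b2
        _ = δ/2 := by ring
    rw [← hδ] at this
    linarith
  -- lintegral version, conclude μ' = ν'
  have hmain : μ' = ν' := by
    apply ext_of_forall_lintegral_eq_of_IsFiniteMeasure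
    intro f
    have hcoe : Continuous fun x : ℝ => (f x : ℝ) := NNReal.continuous_coe.comp f.continuous
    obtain ⟨C, hC⟩ := f.bounded
    have hint : ∀ (κ : Measure ℝ), IsProbabilityMeasure κ →
        Integrable (fun x => (f x : ℝ)) κ := by
      intro κ hκ
      apply Integrable.mono' (integrable_const (C + (f 0 : ℝ))) hcoe.aestronglyMeasurable
      apply ae_of_all
      intro x
      have hd := hC x 0
      rw [NNReal.dist_eq] at hd
      rw [Real.norm_eq_abs, abs_of_nonneg (f x).coe_nonneg]
      calc (f x : ℝ) = ((f x : ℝ) - (f 0 : ℝ)) + (f 0 : ℝ) := by ring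
        _ ≤ |(f x : ℝ) - (f 0 : ℝ)| + (f 0 : ℝ) := by
            have := le_abs_self ((f x : ℝ) - (f 0 : ℝ)); linarith
        _ ≤ C + (f 0 : ℝ) := by linarith
    rw [lintegral_coe_eq_integral f (hint μ' ‹_›), lintegral_coe_eq_integral f (hint ν' ‹_›),
      hbc _ hcoe]
  -- pull back
  have hemb : MeasurableEmbedding T := hTc.measurableEmbedding hTinj
  ext s hs
  calc μ s = μ (T ⁻¹' (T '' s)) := by rw [hTinj.preimage_image]
    _ = μ' (T '' s) := (hemb.map_apply μ (T '' s)).symm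
    _ = ν' (T '' s) := by rw [hmain]
    _ = ν (T ⁻¹' (T '' s)) := hemb.map_apply ν (T '' s)
    _ = ν s := by rw [hTinj.preimage_image]

/-- Cascade relation for the limit of the centered maximum of a
Gaussian branching random walk: if the laws `μM n` of the maxima satisfy the branching
recursion `M_n =law max_{i≤b}(ζ_i + M_{n-1}^{(i)})` with i.i.d. `N(0,1)` increments,
`m_n - m_{n-1} → α = √(2 log b)`, and `P(M_n ≤ m_n + u) → E(e^{-α⁻¹ e^{-αu} 𝒵})` for all
`u ∈ ℝ` where `𝒵` has law `ρ` (a.s. positive and finite), then `ρ` satisfies the cascade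
relation `𝒵 =law ∑_{i=1}^b e^{α ζ_i - α²} 𝒵_i` with `ζ_i` i.i.d. `N(0,1)` independent of
the i.i.d. copies `𝒵_i` of `𝒵`. -/
theorem stmt19 (b : ℕ) (hb : 2 ≤ b) (α : ℝ) (hα : α = Real.sqrt (2 * Real.log b))
    (ρ : Measure ℝ) [IsProbabilityMeasure ρ] (hpos : ρ (Set.Iic 0) = 0)
    (μM : ℕ → Measure ℝ) (hprob : ∀ n, IsProbabilityMeasure (μM n))
    (hrec : ∀ n : ℕ, μM (n + 1) =
      Measure.map (fun q : (Fin b → ℝ) × (Fin b → ℝ) => ⨆ i, (q.1 i + q.2 i))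
        ((Measure.pi fun _ : Fin b => gaussianReal 0 1).prod
          (Measure.pi fun _ : Fin b => μM n)))
    (m : ℕ → ℝ) (hm : Tendsto (fun n => m (n + 1) - m n) atTop (nhds α))
    (hconv : ∀ u : ℝ, Tendsto (fun n => (μM n (Set.Iic (m n + u))).toReal) atTop
      (nhds (∫ z, Real.exp (-(α⁻¹ * Real.exp (-α * u) * z)) ∂ρ))) :
    ρ = Measure.map
        (fun q : (Fin b → ℝ) × (Fin b → ℝ) => ∑ i, Real.exp (α * q.1 i - α ^ 2) * q.2 i)
        ((Measure.pi fun _ : Fin b => gaussianReal 0 1).prod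
          (Measure.pi fun _ : Fin b => ρ)) := by
  haveI : NeZero b := ⟨by omega⟩
  haveI := hprob
  have hα0 : 0 < α := by
    rw [hα]
    apply Real.sqrt_pos.2
    have : (1:ℝ) < b := by exact_mod_cast (by omega : 1 < b)
    have := Real.log_pos this
    linarith
  -- notation
  set γb : Measure (Fin b → ℝ) := Measure.pi fun _ : Fin b => gaussianReal 0 1 with hγb
  set ρb : Measure (Fin b → ℝ) := Measure.pi fun _ : Fin b => ρ with hρb
  set P : Measure ((Fin b → ℝ) × (Fin b → ℝ)) := γb.prod ρb with hP
  set S : (Fin b → ℝ) × (Fin b → ℝ) → ℝ :=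
    fun q => ∑ i, Real.exp (α * q.1 i - α ^ 2) * q.2 i with hS
  have hSc : Continuous S := by
    apply continuous_finset_sum
    intro i _
    fun_prop
  set ν : Measure ℝ := Measure.map S P with hν
  haveI : IsProbabilityMeasure ν := Measure.isProbabilityMeasure_map hSc.measurable.aemeasurable
  set F : ℕ → ℝ → ℝ := fun n x => (μM n (Set.Iic x)).toReal with hF
  set φ : ℝ → ℝ := fun u => ∫ z, Real.exp (-(α⁻¹ * Real.exp (-α * u) * z)) ∂ρ with hφ
  -- basic properties of F
  have hFmono : ∀ n, Monotone (F n) := fun n x y hxy =>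
    ENNReal.toReal_mono (measure_ne_top _ _) (measure_mono (Set.Iic_subset_Iic.2 hxy))
  have hF0 : ∀ n x, 0 ≤ F n x := fun n x => ENNReal.toReal_nonneg
  have hF1 : ∀ n x, F n x ≤ 1 := by
    intro n x
    have h1 : μM n (Set.Iic x) ≤ 1 := prob_le_one
    calc F n x ≤ (1 : ℝ≥0∞).toReal := ENNReal.toReal_mono ENNReal.one_ne_top h1
      _ = 1 := by simp
  have hFmeas : ∀ n, Measurable (F n) :=
    fun n => ENNReal.measurable_toReal.comp (aux_cdf_measurable (μM n))
  have hφcont : Continuous φ := aux_phi_cont hα0 ρ hpos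
  -- real-form recursion
  have hrecR : ∀ n x, F (n + 1) x = ∫ ζ, ∏ i, F n (x - ζ i) ∂γb := by
    intro n x
    have hmeas : Measurable fun ζ : Fin b → ℝ => ∏ i, μM n (Set.Iic (x - ζ i)) := by
      apply Finset.measurable_prod
      intro i _
      exact (aux_cdf_measurable (μM n)).comp (measurable_const.sub (measurable_pi_apply i))
    have hfin : ∀ᵐ ζ ∂γb, (∏ i, μM n (Set.Iic (x - ζ i))) < ⊤ := by
      apply ae_of_all
      intro ζ
      calc (∏ i, μM n (Set.Iic (x - ζ i))) ≤ 1 :=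
            Finset.prod_le_one (fun _ _ => bot_le) (fun i _ => prob_le_one)
        _ < ⊤ := ENNReal.one_lt_top
    calc F (n + 1) x = (μM (n + 1) (Set.Iic x)).toReal := rfl
      _ = ((Measure.map (fun q : (Fin b → ℝ) × (Fin b → ℝ) => ⨆ i, (q.1 i + q.2 i))
            (γb.prod (Measure.pi fun _ : Fin b => μM n))) (Set.Iic x)).toReal := by
          rw [hrec n, hγb]
      _ = (∫⁻ ζ, ∏ i, μM n (Set.Iic (x - ζ i)) ∂γb).toReal := by
          rw [hγb]; rw [aux_rec hb (gaussianReal 0 1) (μM n) x]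
      _ = ∫ ζ, (∏ i, μM n (Set.Iic (x - ζ i))).toReal ∂γb :=
          (integral_toReal hmeas.aemeasurable hfin).symm
      _ = ∫ ζ, ∏ i, F n (x - ζ i) ∂γb := by
          congr 1; funext ζ; rw [ENNReal.toReal_prod]
  -- the fixed point relation
  have hstar : ∀ u : ℝ, φ u = ∫ ζ, ∏ i, φ (u + α - ζ i) ∂γb := by
    intro u
    have h1 : Tendsto (fun n => F (n + 1) (m (n + 1) + u)) atTop (nhds (φ u)) :=
      (hconv u).comp (tendsto_add_atTop_nat 1)
    have h2 : Tendsto (fun n => F (n + 1) (m (n + 1) + u)) atTop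
        (nhds (∫ ζ, ∏ i, φ (u + α - ζ i) ∂γb)) := by
      have heq : ∀ n, F (n + 1) (m (n + 1) + u)
          = ∫ ζ, ∏ i, F n (m (n + 1) + u - ζ i) ∂γb := fun n => hrecR n _
      simp_rw [heq]
      apply tendsto_integral_of_dominated_convergence (bound := fun _ => (1:ℝ))
      · intro n
        apply Measurable.aestronglyMeasurable
        apply Finset.measurable_prod
        intro i _
        exact (hFmeas n).comp (measurable_const.sub (measurable_pi_apply i))
      · exact integrable_const 1
      · intro n
        apply ae_of_all
        intro ζ
        rw [Real.norm_eq_abs, abs_of_nonneg (Finset.prod_nonneg fun i _ => hF0 _ _)]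
        exact Finset.prod_le_one (fun i _ => hF0 _ _) (fun i _ => hF1 _ _)
      · apply ae_of_all
        intro ζ
        apply tendsto_finset_prod
        intro i _
        have harg : Tendsto (fun n => u + (m (n + 1) - m n) - ζ i) atTop
            (nhds (u + α - ζ i)) :=
          (tendsto_const_nhds.add hm).sub tendsto_const_nhds
        have := aux_squeeze hFmono hF0 hF1 hφcont hconv harg
        convert this using 2 with n
        ring_nf
    exact tendsto_nhds_unique h1 h2
  -- positivity of coordinates
  have hsnd_null : P {q : (Fin b → ℝ) × (Fin b → ℝ) | ¬ ∀ i, 0 < q.2 i} = 0 := by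
    have hset : {q : (Fin b → ℝ) × (Fin b → ℝ) | ¬ ∀ i, 0 < q.2 i}
        = Prod.snd ⁻¹' {w : Fin b → ℝ | ¬ ∀ i, 0 < w i} := rfl
    have hwnull : ρb {w : Fin b → ℝ | ¬ ∀ i, 0 < w i} = 0 := by
      have hsub : {w : Fin b → ℝ | ¬ ∀ i, 0 < w i} ⊆ ⋃ i, {w : Fin b → ℝ | w i ≤ 0} := by
        intro w hw
        simp only [Set.mem_setOf_eq, not_forall, not_lt] at hw
        obtain ⟨i, hi⟩ := hw
        exact Set.mem_iUnion.2 ⟨i, hi⟩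
      apply measure_mono_null hsub
      apply measure_iUnion_null
      intro i
      have : {w : Fin b → ℝ | w i ≤ 0}
          = Set.pi Set.univ (Function.update (fun _ : Fin b => (Set.univ : Set ℝ)) i
            (Set.Iic 0)) := by
        ext w
        simp only [Set.mem_setOf_eq, Set.mem_pi, Set.mem_univ, forall_true_left]
        constructor
        · intro hw j
          rcases eq_or_ne j i with rfl | hj
          · simpa using hw
          · simp [Function.update_of_ne hj]
        · intro hw
          have := hw i
          simpa using this
      rw [hρb, this, Measure.pi_pi]
      apply Finset.prod_eq_zero (Finset.mem_univ i)
      simp [hpos]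
    rw [hset, hP, ← Set.univ_prod, Measure.prod_prod]
    · rw [hwnull, mul_zero]
  have haeP : ∀ᵐ q ∂P, ∀ i, 0 < q.2 i := by
    rw [ae_iff]
    exact hsnd_null
  -- ν has no mass on (-∞, 0]
  have hνpos : ν (Set.Iic 0) = 0 := by
    rw [hν, Measure.map_apply hSc.measurable measurableSet_Iic]
    apply measure_mono_null _ hsnd_null
    intro q hq
    simp only [Set.mem_preimage, Set.mem_Iic] at hq
    simp only [Set.mem_setOf_eq]
    intro hall
    have hSpos : 0 < S q := by
      apply Finset.sum_pos
      · intro i _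
        exact mul_pos (Real.exp_pos _) (hall i)
      · exact Finset.univ_nonempty
    rw [hS] at hSpos
    linarith
  -- Laplace transforms agree
  have hlap : ∀ t : ℝ, 0 < t → ∫ z, Real.exp (-(t * z)) ∂ρ = ∫ z, Real.exp (-(t * z)) ∂ν := by
    intro t ht
    set u : ℝ := -Real.log (α * t) / α with hu_def
    have hu : α⁻¹ * Real.exp (-α * u) = t := by
      have h1 : -α * u = Real.log (α * t) := by
        rw [hu_def]; field_simp
      rw [h1, Real.exp_log (by positivity)]
      field_simp
    have coef : ∀ w : ℝ, α⁻¹ * Real.exp (-α * (u + α - w)) = t * Real.exp (α * w - α ^ 2) := by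
      intro w
      rw [show -α * (u + α - w) = (-α * u) + (α * w - α ^ 2) by ring, Real.exp_add,
        ← mul_assoc, hu]
    -- LHS = φ u
    have hL : φ u = ∫ z, Real.exp (-(t * z)) ∂ρ := by
      rw [hφ]
      simp_rw [hu]
    -- RHS
    have hR : ∫ ζ, ∏ i, φ (u + α - ζ i) ∂γb = ∫ z, Real.exp (-(t * z)) ∂ν := by
      have hcont2 : Continuous fun q : (Fin b → ℝ) × (Fin b → ℝ) =>
          Real.exp (-(t * S q)) := by fun_prop
      rw [hν, integral_map hSc.measurable.aemeasurable
        (by fun_prop : Continuous fun z : ℝ => Real.exp (-(t * z))).aestronglyMeasurable]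
      have hexp : ∀ q : (Fin b → ℝ) × (Fin b → ℝ),
          Real.exp (-(t * S q)) = ∏ i, Real.exp (-(t * Real.exp (α * q.1 i - α ^ 2) * q.2 i)) := by
        intro q
        rw [hS, ← Real.exp_sum]
        congr 1
        rw [Finset.mul_sum, ← Finset.sum_neg_distrib]
        exact Finset.sum_congr rfl fun i _ => by ring

      simp_rw [hexp]
      have hint : Integrable (fun q : (Fin b → ℝ) × (Fin b → ℝ) =>
          ∏ i, Real.exp (-(t * Real.exp (α * q.1 i - α ^ 2) * q.2 i))) P := by
        apply Integrable.mono' (integrable_const (1:ℝ))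
        · apply Continuous.aestronglyMeasurable
          apply continuous_finset_prod
          intro i _
          fun_prop
        · filter_upwards [haeP] with q hq
          rw [Real.norm_eq_abs, abs_of_nonneg (Finset.prod_nonneg fun i _ =>
            (Real.exp_pos _).le)]
          apply Finset.prod_le_one (fun i _ => (Real.exp_pos _).le)
          intro i _
          rw [Real.exp_le_one_iff]
          have : 0 ≤ t * Real.exp (α * q.1 i - α ^ 2) * q.2 i := by
            have := hq i
            positivity
          linarith
      rw [hP, MeasureTheory.integral_prod _ hint]
      congr 1
      funext ζ
      rw [hρb, aux_integral_pi_prod ρ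
        (fun i z => Real.exp (-(t * Real.exp (α * ζ i - α ^ 2) * z)))]
      apply Finset.prod_congr rfl
      intro i _
      simp only [hφ]
      congr 1
      funext z
      rw [coef (ζ i)]
    calc ∫ z, Real.exp (-(t * z)) ∂ρ = φ u := hL.symm
      _ = ∫ ζ, ∏ i, φ (u + α - ζ i) ∂γb := hstar u
      _ = ∫ z, Real.exp (-(t * z)) ∂ν := hR
  -- conclude
  have := aux_ext hpos hνpos hlap
  rw [this, hν, hP, hγb, hρb, hS]
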